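/- Suppose the highly robust KKT conditions hold at x̄ ∈ Ω for (P_U) with robust feasible set Ω = { x : g_j(x, v_j) ≤ 0 ∀ v_j ∈ V_j, j ∈ J }, and that (f, g) is generalized locally convex at x̄. Then x̄ is a local highly robust weakly efficient solution of (P_U). -/

import Mathlib

private noncomputable def wdEval {X : Type*} [NormedAddCommGroup X] [NormedSpace ℝ X] (d : X) :
    WeakDual ℝ X →ₗ[ℝ] ℝ where
  toFun φ := φ d
  map_add' _ _ := rfl
  map_smul' _ _ := rfl

/-- If the highly robust KKT conditions hold at `x̄` and `(f, g)` is
generalized locally convex at `x̄`, then `x̄` is a local highly robust weakly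
efficient solution of `(P_U)`. Here `Df i = ∂f_i(x̄)` and `Dg j v = ∂_x g_j(x̄, v)`
are the relevant subdifferentials, `G j = sup_v g j · v`, and the robust feasible
set is `Ω = {x : g j x v ≤ 0 ∀ j, v}`. -/
theorem local_highly_robust_weak_of_KKT
    {X : Type*} [NormedAddCommGroup X] [NormedSpace ℝ X] [CompleteSpace X]
    {p q : ℕ} (f : Fin p → X → ℝ)
    (V : Fin q → Type*) [∀ j, Nonempty (V j)]
    (g : ∀ j : Fin q, X → V j → ℝ)
    (hbdd : ∀ j x, BddAbove (Set.range (g j x)))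
    (U : Fin p → Set (WeakDual ℝ X))
    (Df : Fin p → Set (WeakDual ℝ X)) (Dg : ∀ j, V j → Set (WeakDual ℝ X))
    (Ω : Set X) (hΩ : Ω = {x | ∀ j, ∀ v : V j, g j x v ≤ 0})
    (G : Fin q → X → ℝ) (hG : ∀ j x, G j x = ⨆ v : V j, g j x v)
    (xb : X) (hxb : xb ∈ Ω)
    (hKKT : ∀ u : Fin p → WeakDual ℝ X, (∀ i, u i ∈ U i) →
      ∃ (lam : Fin p → ℝ) (mu : Fin q → ℝ),
        (∀ i, 0 ≤ lam i) ∧ (∑ i, lam i) = 1 ∧ (∀ j, 0 ≤ mu j) ∧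
        (∀ j, mu j * G j xb = 0) ∧
        ∃ (xs : Fin p → WeakDual ℝ X) (ys : Fin q → WeakDual ℝ X),
          (∀ i, xs i ∈ Df i) ∧
          (∀ j, ys j ∈ closure (convexHull ℝ
            (⋃ v ∈ {v : V j | g j xb v = G j xb}, Dg j v))) ∧
          (∑ i, lam i • u i) = (∑ i, lam i • xs i) + (∑ j, mu j • ys j))
    (hconv : ∃ δ > (0 : ℝ), ∀ x ∈ Ω ∩ Metric.ball xb δ,
      ∀ u : Fin p → WeakDual ℝ X, (∀ i, u i ∈ U i) → ∃ d : X,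
        (∀ i, ∀ xst ∈ Df i, (xst : WeakDual ℝ X) d - u i d ≤
          (f i x - u i x) - (f i xb - u i xb)) ∧
        (∀ j, ∀ v ∈ {v : V j | g j xb v = G j xb}, ∀ xst ∈ Dg j v,
          (xst : WeakDual ℝ X) d ≤ g j x v - g j xb v)) :
    ∃ δ > (0 : ℝ), ∀ u : Fin p → WeakDual ℝ X, (∀ i, u i ∈ U i) →
      ¬ ∃ x ∈ Ω ∩ Metric.ball xb δ, ∀ i, f i x - u i x < f i xb - u i xb := by
  obtain ⟨δ, hδ, hc⟩ := hconv
  refine ⟨δ, hδ, ?_⟩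
  rintro u hu ⟨x, hx, hlt⟩
  obtain ⟨d, hdf, hdg⟩ := hc x hx u hu
  obtain ⟨lam, mu, hlam, hlamsum, hmu, hcomp, xs, ys, hxs, hys, heq⟩ := hKKT u hu
  -- G j x ≤ 0 and g j x v ≤ G j x
  have hGle : ∀ j, G j x ≤ 0 := by
    intro j
    rw [hG]
    exact ciSup_le fun v => by
      have := hΩ ▸ hx.1
      exact this j v
  -- ys j d ≤ G j x - G j xb
  have hysd : ∀ j, (ys j : WeakDual ℝ X) d ≤ G j x - G j xb := by
    intro j
    set c := G j x - G j xb with hc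
    have hclosed : IsClosed {φ : WeakDual ℝ X | φ d ≤ c} :=
      isClosed_le (WeakDual.eval_continuous d) continuous_const
    have hconvex : Convex ℝ {φ : WeakDual ℝ X | φ d ≤ c} := by
      intro a ha b hb s t hs ht hst
      simp only [Set.mem_setOf_eq] at ha hb ⊢
      have : (s • a + t • b : WeakDual ℝ X) d = s * a d + t * b d := rfl
      rw [this]
      calc s * a d + t * b d ≤ s * c + t * c := by
            apply add_le_add <;>
              [exact mul_le_mul_of_nonneg_left ha hs;
               exact mul_le_mul_of_nonneg_left hb ht]
        _ = c := by rw [← add_mul, hst, one_mul]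
    have hsub : (⋃ v ∈ {v : V j | g j xb v = G j xb}, Dg j v) ⊆
        {φ : WeakDual ℝ X | φ d ≤ c} := by
      rintro φ hφ
      simp only [Set.mem_iUnion] at hφ
      obtain ⟨v, hv, hφ⟩ := hφ
      have h1 := hdg j v hv φ hφ
      have h2 : g j x v ≤ G j x := by
        rw [hG]; exact le_ciSup (hbdd j x) v
      have h3 : g j xb v = G j xb := hv
      simp only [Set.mem_setOf_eq, hc]
      linarith
    exact closure_minimal (convexHull_min hsub hconvex) hclosed (hys j)
  -- apply heq at d
  have happ : (∑ i, lam i * (u i : WeakDual ℝ X) d)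
      = (∑ i, lam i * (xs i : WeakDual ℝ X) d) + (∑ j, mu j * (ys j : WeakDual ℝ X) d) := by
    have := congrArg (wdEval d) heq
    simp only [map_sum, map_add, map_smul, smul_eq_mul] at this
    exact this
  -- RHS mu part ≤ 0
  have hmupart : (∑ j, mu j * (ys j : WeakDual ℝ X) d) ≤ 0 := by
    apply Finset.sum_nonpos
    intro j _
    have h1 : mu j * (ys j : WeakDual ℝ X) d ≤ mu j * (G j x - G j xb) :=
      mul_le_mul_of_nonneg_left (hysd j) (hmu j)
    have h2 : mu j * (G j x - G j xb) = mu j * G j x := by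
      have := hcomp j; ring_nf; linarith [hcomp j]
    have h3 : mu j * G j x ≤ 0 := mul_nonpos_of_nonneg_of_nonpos (hmu j) (hGle j)
    linarith
  -- lam part strict
  have hstrict : (∑ i, lam i * ((xs i : WeakDual ℝ X) d - u i d)) < 0 := by
    have hne : ∃ i, 0 < lam i := by
      by_contra h
      push_neg at h
      have : (∑ i, lam i) = 0 :=
        Finset.sum_eq_zero fun i _ => le_antisymm (h i) (hlam i)
      rw [hlamsum] at this; norm_num at this
    obtain ⟨i0, hi0⟩ := hne
    have key : ∀ i, (xs i : WeakDual ℝ X) d - u i d < 0 := by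
      intro i
      have := hdf i (xs i) (hxs i)
      have := hlt i
      linarith
    calc (∑ i, lam i * ((xs i : WeakDual ℝ X) d - u i d))
        < ∑ i : Fin p, (0 : ℝ) := by
          apply Finset.sum_lt_sum
          · intro i _
            exact mul_nonpos_of_nonneg_of_nonpos (hlam i) (key i).le
          · exact ⟨i0, Finset.mem_univ i0, mul_neg_of_pos_of_neg hi0 (key i0)⟩
      _ = 0 := by simp
  have : (∑ i, lam i * ((xs i : WeakDual ℝ X) d - u i d))
      = - (∑ j, mu j * (ys j : WeakDual ℝ X) d) := by
    simp only [mul_sub]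
    rw [Finset.sum_sub_distrib]
    linarith [happ]
  linarith
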